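/- Suppose the optimal mixture loss l*(p) on the segment between vertices e_k and e_{k'} is constant, i.e., l*((1−α)e_k + α e_{k'}) = c for all α ∈ [0,1], where l* is the concave pointwise minimum of linear functions p ↦ Σ_j p_j L_j(h) over h ∈ H (with the minimum attained). Then there exists h* ∈ H that simultaneously minimizes L_k and L_{k'} and satisfies L_k(h*) = L_{k'}(h*) = c; conversely, existence of such h* implies l* is constant on the segment. -/
import Mathlib

private lemma seg_sum {H : Type*} {K : ℕ} (L : H → Fin K → ℝ) (k k' : Fin K)
    (α : ℝ) (h : H) :
    ∑ j, ((1 - α) * (if j = k then 1 else 0) + α * (if j = k' then 1 else 0)) * L h j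
      = (1 - α) * L h k + α * L h k' := by
  simp [add_mul, Finset.sum_add_distrib, mul_assoc, ite_mul, one_mul, zero_mul,
    mul_ite, mul_zero, Finset.sum_ite_eq']

private lemma seg_mem {K : ℕ} (k k' : Fin K) (α : ℝ) (h0 : 0 ≤ α) (h1 : α ≤ 1) :
    (fun j => (1 - α) * (if j = k then 1 else 0) + α * (if j = k' then 1 else 0))
      ∈ stdSimplex ℝ (Fin K) := by
  constructor
  · intro i
    have : (0:ℝ) ≤ 1 - α := by linarith
    positivity
  · have := Finset.sum_ite_eq' Finset.univ k (fun _ => (1:ℝ))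
    simp [Finset.sum_add_distrib, Finset.mul_sum, mul_ite, mul_one, mul_zero,
      Finset.sum_ite_eq']

/-- The optimal mixture loss `l*` is constant (equal to `c`) along the segment
between vertices `e_k` and `e_{k'}` iff the two groups are oracle-equivalent: there exists a
common minimizer `h*` of `L_k` and `L_{k'}` with `L_k(h*) = L_{k'}(h*) = c`. -/
theorem constant_segment_iff_oracle_equivalent {H : Type*} (K : ℕ)
    (L : H → Fin K → ℝ) (lstar : (Fin K → ℝ) → ℝ)
    (hmin : ∀ p ∈ stdSimplex ℝ (Fin K), ∃ h : H,
      lstar p = ∑ j, p j * L h j ∧ ∀ h' : H, lstar p ≤ ∑ j, p j * L h' j)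
    (k k' : Fin K) (c : ℝ) :
    (∀ α ∈ Set.Icc (0 : ℝ) 1,
        lstar (fun j => (1 - α) * (if j = k then 1 else 0)
          + α * (if j = k' then 1 else 0)) = c)
    ↔ ∃ hstar : H, (∀ h : H, L hstar k ≤ L h k) ∧ (∀ h : H, L hstar k' ≤ L h k')
        ∧ L hstar k = c ∧ L hstar k' = c := by
  constructor
  · intro hconst
    -- get data at α = 0, 1, 1/2
    obtain ⟨h0, h0eq, h0min⟩ := hmin _ (seg_mem k k' 0 le_rfl zero_le_one)
    obtain ⟨h1, h1eq, h1min⟩ := hmin _ (seg_mem k k' 1 zero_le_one le_rfl)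
    obtain ⟨hm, hmeq, hmmin⟩ := hmin _ (seg_mem k k' (1/2) (by norm_num) (by norm_num))
    have e0 := hconst 0 (by constructor <;> norm_num)
    have e1 := hconst 1 (by constructor <;> norm_num)
    have em := hconst (1/2) (by constructor <;> norm_num)
    -- minimality at endpoints
    have mink : ∀ h : H, c ≤ L h k := by
      intro h
      have := h0min h
      rw [e0] at this
      simpa [seg_sum L k k' 0 h] using this
    have mink' : ∀ h : H, c ≤ L h k' := by
      intro h
      have := h1min h
      rw [e1] at this
      simpa [seg_sum L k k' 1 h] using this
    -- midpoint minimizer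
    have hmval : (1 - (1/2:ℝ)) * L hm k + (1/2) * L hm k' = c := by
      rw [← seg_sum L k k' (1/2) hm, ← hmeq, em]
    have hk := mink hm
    have hk' := mink' hm
    have hkc : L hm k = c := by linarith
    have hk'c : L hm k' = c := by linarith
    exact ⟨hm, fun h => hkc ▸ mink h, fun h => hk'c ▸ mink' h, hkc, hk'c⟩
  · rintro ⟨hstar, hkmin, hk'min, hkc, hk'c⟩ α ⟨ha0, ha1⟩
    obtain ⟨h, heq, hle⟩ := hmin _ (seg_mem k k' α ha0 ha1)
    have hub := hle hstar
    rw [seg_sum L k k' α hstar, hkc, hk'c] at hub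
    have hlb : c ≤ lstar (fun j => (1 - α) * (if j = k then 1 else 0)
        + α * (if j = k' then 1 else 0)) := by
      rw [heq, seg_sum L k k' α h]
      have h1 : c ≤ L h k := hkc ▸ hkmin h
      have h2 : c ≤ L h k' := hk'c ▸ hk'min h
      nlinarith
    linarith
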